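/- Let u be a bounded weak solution of Burgers' equation on an open set Ω ⊂ ℝ² containing the closed square [−2r, 2r]², and let η ∈ C_c^∞((−1,1)) with ∫ η = 1; set η_r(x) := r^{−1} η(x/r). Then there is a constant C > 0 depending only on ‖u‖_{L^∞} and η such that ⨍_{|s| ≤ r} ⨍_{|t| ≤ r} | ∫ (u(s,x) − u(t,x)) η_r(x) dx | ds dt ≤ C D(r), where D(r) := ⨍_{|t| ≤ r} ⨍_{|x| ≤ r} ⨍_{|y| ≤ r} |u(t,x) − u(t,y)| dx dy dt. -/

import Mathlib

open MeasureTheory Set Filter Topology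

noncomputable section

/-- The `t`-partial derivative (coordinates on `ℝ²` are `z = (t, x)`). -/
def pdt (φ : ℝ × ℝ → ℝ) (z : ℝ × ℝ) : ℝ := fderiv ℝ φ z (1, 0)

/-- The `x`-partial derivative. -/
def pdx (φ : ℝ × ℝ → ℝ) (z : ℝ × ℝ) : ℝ := fderiv ℝ φ z (0, 1)

/-- `φ ∈ C_c^∞(Ω)`: a smooth compactly supported test function with support in `Ω`. -/
def IsTestFun (Ω : Set (ℝ × ℝ)) (φ : ℝ × ℝ → ℝ) : Prop :=
  ContDiff ℝ (⊤ : ℕ∞) φ ∧ HasCompactSupport φ ∧ tsupport φ ⊆ Ω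

/-- `u` is a weak solution of Burgers' equation `∂ₜ u + ∂ₓ (u²/2) = 0` on `Ω`. -/
def IsWeakBurgers (Ω : Set (ℝ × ℝ)) (u : ℝ × ℝ → ℝ) : Prop :=
  ∀ φ, IsTestFun Ω φ → ∫ z in Ω, (u z * pdt φ z + u z ^ 2 / 2 * pdx φ z) = 0

/-- The (finite) signed Radon measure `μ` on `Ω` is the quadratic entropy production
`μ = ∂ₜ(u²/2) + ∂ₓ(u³/3)` of `u`. -/
def IsEntropyProduction (Ω : Set (ℝ × ℝ)) (u : ℝ × ℝ → ℝ)
    (μ : MeasureTheory.SignedMeasure (ℝ × ℝ)) : Prop :=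
  μ.totalVariation Ωᶜ = 0 ∧
  ∀ φ, IsTestFun Ω φ →
    ∫ z in Ω, (u z ^ 2 / 2 * pdt φ z + u z ^ 3 / 3 * pdx φ z)
      = -((∫ z, φ z ∂μ.toJordanDecomposition.posPart)
          - ∫ z, φ z ∂μ.toJordanDecomposition.negPart)

/-- The square `Q_r(z) = (t-r,t+r) × (x-r,x+r)` for `z = (t,x)`. -/
def Qsq (z : ℝ × ℝ) (r : ℝ) : Set (ℝ × ℝ) :=
  Ioo (z.1 - r) (z.1 + r) ×ˢ Ioo (z.2 - r) (z.2 + r)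

/-- The set `Ω_{α,K}` of points where `|μ|(Q_r(z)) ≤ K r^{1+α}` for all
`r ∈ (0, min(d(z),1))`; here `d(z)` is the `ℓ^∞`-distance of `z` to `Ωᶜ`
(the product metric on `ℝ × ℝ` is the sup metric). -/
def OmegaAK (Ω : Set (ℝ × ℝ)) (μ : MeasureTheory.SignedMeasure (ℝ × ℝ)) (α K : ℝ) :
    Set (ℝ × ℝ) :=
  {z | z ∈ Ω ∧ ∀ r : ℝ, 0 < r → r < min (Metric.infDist z Ωᶜ) 1 →
    μ.totalVariation (Qsq z r) ≤ ENNReal.ofReal (K * r ^ (1 + α))}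

lemma hasFDerivAt_prodfun {ψ ζ : ℝ → ℝ} (hψ : ContDiff ℝ (⊤ : ℕ∞) ψ)
    (hζ : ContDiff ℝ (⊤ : ℕ∞) ζ) (z : ℝ × ℝ) :
    HasFDerivAt (fun w : ℝ × ℝ => ψ w.1 * ζ w.2)
      (ψ z.1 • ((deriv ζ z.2) • (ContinuousLinearMap.snd ℝ ℝ ℝ))
        + ζ z.2 • ((deriv ψ z.1) • (ContinuousLinearMap.fst ℝ ℝ ℝ))) z := by
  have h1 : HasFDerivAt (fun w : ℝ × ℝ => ψ w.1)
      ((deriv ψ z.1) • (ContinuousLinearMap.fst ℝ ℝ ℝ)) z := by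
    have h := ((hψ.differentiable (by simp) z.1).hasDerivAt).hasFDerivAt.comp z
      (hasFDerivAt_fst (p := z))
    exact h.congr_fderiv (ContinuousLinearMap.ext fun v => by simp [mul_comm])
  have h2 : HasFDerivAt (fun w : ℝ × ℝ => ζ w.2)
      ((deriv ζ z.2) • (ContinuousLinearMap.snd ℝ ℝ ℝ)) z := by
    have h := ((hζ.differentiable (by simp) z.2).hasDerivAt).hasFDerivAt.comp z
      (hasFDerivAt_snd (p := z))
    exact h.congr_fderiv (ContinuousLinearMap.ext fun v => by simp [mul_comm])
  exact h1.mul h2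

lemma pdt_prodfun {ψ ζ : ℝ → ℝ} (hψ : ContDiff ℝ (⊤ : ℕ∞) ψ)
    (hζ : ContDiff ℝ (⊤ : ℕ∞) ζ) (z : ℝ × ℝ) :
    pdt (fun w : ℝ × ℝ => ψ w.1 * ζ w.2) z = deriv ψ z.1 * ζ z.2 := by
  rw [pdt, (hasFDerivAt_prodfun hψ hζ z).fderiv]
  simp [mul_comm]

lemma pdx_prodfun {ψ ζ : ℝ → ℝ} (hψ : ContDiff ℝ (⊤ : ℕ∞) ψ)
    (hζ : ContDiff ℝ (⊤ : ℕ∞) ζ) (z : ℝ × ℝ) :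
    pdx (fun w : ℝ × ℝ => ψ w.1 * ζ w.2) z = ψ z.1 * deriv ζ z.2 := by
  rw [pdx, (hasFDerivAt_prodfun hψ hζ z).fderiv]
  simp

lemma tsupport_prodfun {ψ ζ : ℝ → ℝ} :
    tsupport (fun w : ℝ × ℝ => ψ w.1 * ζ w.2) ⊆ tsupport ψ ×ˢ tsupport ζ := by
  have h1 : Function.support (fun w : ℝ × ℝ => ψ w.1 * ζ w.2)
      ⊆ Function.support ψ ×ˢ Function.support ζ := by
    intro z hz
    simp only [Function.mem_support, mul_ne_zero_iff] at hz
    exact ⟨hz.1, hz.2⟩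
  calc tsupport (fun w : ℝ × ℝ => ψ w.1 * ζ w.2)
      ⊆ closure (Function.support ψ ×ˢ Function.support ζ) := closure_mono h1
    _ = tsupport ψ ×ˢ tsupport ζ := closure_prod_eq

lemma hcs_prodfun {ψ ζ : ℝ → ℝ} (hψ : HasCompactSupport ψ) (hζ : HasCompactSupport ζ) :
    HasCompactSupport (fun w : ℝ × ℝ => ψ w.1 * ζ w.2) :=
  IsCompact.of_isClosed_subset (hψ.prod hζ) isClosed_closure tsupport_prodfun

variable {α : Type*} [MeasurableSpace α] {μ : Measure α}

lemma integrable_of_bdd_supp {v : α → ℝ} (hv : AEStronglyMeasurable v μ)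
    {s : Set α} (hs : MeasurableSet s) (hT : μ s ≠ ⊤) (c : ℝ)
    (hb : ∀ x ∈ s, |v x| ≤ c) (hz : ∀ x ∉ s, v x = 0) : Integrable v μ := by
  have hg : Integrable (s.indicator (fun _ => c)) μ :=
    (integrable_indicator_iff hs).2 (integrableOn_const hT)
  refine hg.mono' hv (ae_of_all _ fun x => ?_)
  by_cases hx : x ∈ s
  · simpa [Real.norm_eq_abs, indicator_of_mem hx] using hb x hx
  · simp [Real.norm_eq_abs, indicator_of_notMem hx, hz x hx]

lemma integrableOn_of_bdd {v : α → ℝ} {s : Set α} (hs : MeasurableSet s)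
    (hv : AEStronglyMeasurable v (μ.restrict s)) (hT : μ s ≠ ⊤) (c : ℝ)
    (hb : ∀ x ∈ s, |v x| ≤ c) : IntegrableOn v s μ := by
  have hg : IntegrableOn (fun _ => c) s μ := integrableOn_const hT
  refine hg.mono' hv ?_
  rw [ae_restrict_iff' hs]
  exact ae_of_all _ fun x hx => by simpa [Real.norm_eq_abs] using hb x hx

lemma setIntegral_le_of_ae {s : Set α} (hT : μ s ≠ ⊤) {h : α → ℝ}
    (hint : IntegrableOn h s μ) {K : ℝ} (hb : ∀ᵐ t ∂(μ.restrict s), h t ≤ K) :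
    ∫ t in s, h t ∂μ ≤ K * (μ s).toReal := by
  calc ∫ t in s, h t ∂μ ≤ ∫ _t in s, K ∂μ :=
        integral_mono_ae hint (integrableOn_const hT) hb
    _ = K * (μ s).toReal := by simp [mul_comm, Measure.real]

lemma avg_le_of_ae {s : Set α} (h0 : μ s ≠ 0) (hT : μ s ≠ ⊤) {h : α → ℝ}
    (hint : IntegrableOn h s μ) {K : ℝ} (hb : ∀ᵐ t ∂(μ.restrict s), h t ≤ K) :
    ⨍ t in s, h t ∂μ ≤ K := by
  have hpos : 0 < (μ s).toReal := ENNReal.toReal_pos h0 hT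
  rw [setAverage_eq, smul_eq_mul]
  calc (μ s).toReal⁻¹ * ∫ t in s, h t ∂μ ≤ (μ s).toReal⁻¹ * (K * (μ s).toReal) := by
        have := setIntegral_le_of_ae hT hint hb
        exact mul_le_mul_of_nonneg_left this (by positivity)
    _ = K := by field_simp

lemma avg_le_of_ae' {s : Set α} (h0 : μ s ≠ 0) (hT : μ s ≠ ⊤) {h : α → ℝ} {K : ℝ}
    (hK : 0 ≤ K) (hb : ∀ᵐ t ∂(μ.restrict s), h t ≤ K) : ⨍ t in s, h t ∂μ ≤ K := by
  by_cases hint : IntegrableOn h s μ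
  · exact avg_le_of_ae h0 hT hint hb
  · rw [setAverage_eq, integral_undef hint, smul_zero]
    exact hK

lemma exists_const_of_weak_deriv_zero {a b : ℝ} (hab : a < b) {f : ℝ → ℝ}
    (hf : IntegrableOn f (Ioo a b))
    (h : ∀ ψ : ℝ → ℝ, ContDiff ℝ (⊤ : ℕ∞) ψ → HasCompactSupport ψ → tsupport ψ ⊆ Ioo a b →
      ∫ t, deriv ψ t * f t = 0) :
    ∃ c : ℝ, ∀ᵐ t ∂(volume.restrict (Ioo a b)), f t = c := by
  -- a normalized bump supported in `Ioo a b`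
  set m : ℝ := (a + b) / 2 with hm
  have hbump : (0 : ℝ) < (b - a) / 8 ∧ (b - a) / 8 < (b - a) / 4 := by constructor <;> linarith
  set bump : ContDiffBump m := ⟨(b - a) / 8, (b - a) / 4, hbump.1, hbump.2⟩ with hbdef
  set θ : ℝ → ℝ := bump.normed volume with hθdef
  have hθc : Continuous θ := bump.continuous_normed
  have hθsm : ContDiff ℝ (⊤ : ℕ∞) θ := bump.contDiff_normed
  have hθcs : HasCompactSupport θ := bump.hasCompactSupport_normed
  have hθsupp : tsupport θ ⊆ Ioo a b := by
    rw [hθdef, bump.tsupport_normed_eq, Real.closedBall_eq_Icc]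
    intro x hx
    simp only [mem_Icc] at hx
    constructor <;> [skip; skip] <;> simp only [hbdef, hm] at hx <;>
      [linarith [hx.1]; linarith [hx.2]]
  have hθint : ∫ t, θ t = 1 := bump.integral_normed
  -- multiplication against `f` of test functions supported in `Ioo a b`
  set fI : ℝ → ℝ := (Ioo a b).indicator f with hfIdef
  have hfI : Integrable fI := (integrable_indicator_iff measurableSet_Ioo).2 hf
  have hmul : ∀ g : ℝ → ℝ, Continuous g → HasCompactSupport g → tsupport g ⊆ Ioo a b →
      Integrable (fun t => g t * f t) := by
    intro g hgc hgs hgsub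
    have heq : (fun t => g t * f t) = fun t => g t * fI t := funext fun t => by
      by_cases ht : t ∈ Ioo a b
      · simp [hfIdef, indicator_of_mem ht]
      · have hg0 : g t = 0 := image_eq_zero_of_notMem_tsupport (fun hmm => ht (hgsub hmm))
        simp [hg0]
    obtain ⟨C, hC⟩ := hgs.exists_bound_of_continuous hgc
    have : Integrable fun t => g t * fI t :=
      hfI.bdd_mul (c := C) hgc.aestronglyMeasurable (ae_of_all _ fun x => hC x)
    rw [heq]; exact this
  set c : ℝ := ∫ t, θ t * f t with hcdef
  -- key: for every test function `g` supported in `Ioo a b`, `∫ g f = (∫ g) * c`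
  have key : ∀ g : ℝ → ℝ, ContDiff ℝ (⊤ : ℕ∞) g → HasCompactSupport g →
      tsupport g ⊆ Ioo a b → ∫ t, g t * f t = (∫ t, g t) * c := by
    intro g hgsm hgcs hgsub
    set I : ℝ := ∫ t, g t with hIdef
    set w : ℝ → ℝ := fun t => g t - I * θ t with hwdef
    have hwc : Continuous w := hgsm.continuous.sub (continuous_const.mul hθc)
    have hwsm : ContDiff ℝ (⊤ : ℕ∞) w := hgsm.sub (contDiff_const.mul hθsm)
    have hwsupp : tsupport w ⊆ Ioo a b := by
      have hsub : Function.support w ⊆ tsupport g ∪ tsupport θ := by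
        intro t ht
        simp only [Function.mem_support, hwdef] at ht
        by_contra hcon
        simp only [mem_union] at hcon
        push_neg at hcon
        have h1 : g t = 0 := image_eq_zero_of_notMem_tsupport hcon.1
        have h2 : θ t = 0 := image_eq_zero_of_notMem_tsupport hcon.2
        rw [h1, h2] at ht; simp at ht
      have hclosed : IsClosed (tsupport g ∪ tsupport θ) :=
        (isClosed_tsupport g).union (isClosed_tsupport θ)
      exact (closure_minimal hsub hclosed).trans (union_subset hgsub hθsupp)
    have hwcs : HasCompactSupport w := by
      have hsub : Function.support w ⊆ tsupport g ∪ tsupport θ := by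
        intro t ht
        simp only [Function.mem_support, hwdef] at ht
        by_contra hcon
        simp only [mem_union] at hcon
        push_neg at hcon
        have h1 : g t = 0 := image_eq_zero_of_notMem_tsupport hcon.1
        have h2 : θ t = 0 := image_eq_zero_of_notMem_tsupport hcon.2
        rw [h1, h2] at ht; simp at ht
      exact IsCompact.of_isClosed_subset (hgcs.union hθcs) (isClosed_tsupport w)
        (closure_minimal hsub ((isClosed_tsupport g).union (isClosed_tsupport θ)))
    have hgint : Integrable g := hgsm.continuous.integrable_of_hasCompactSupport hgcs
    have hθi : Integrable θ := hθc.integrable_of_hasCompactSupport hθcs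
    have hwint : ∫ t, w t = 0 := by
      have : (fun t => w t) = fun t => g t - I * θ t := rfl
      rw [this, integral_sub hgint (hθi.const_mul I), integral_const_mul, hθint]
      simp [hIdef]
    set ψ : ℝ → ℝ := fun t => ∫ s in a..t, w s with hψdef
    have hψd : ∀ t, HasDerivAt ψ (w t) t := fun t => (hwc.integral_hasStrictDerivAt a t).hasDerivAt
    have hψderiv : deriv ψ = w := funext fun t => (hψd t).deriv
    have hψsm : ContDiff ℝ (⊤ : ℕ∞) ψ := by
      rw [contDiff_infty_iff_deriv]
      exact ⟨fun t => (hψd t).differentiableAt, by rw [hψderiv]; exact hwsm⟩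
    have hψprops : tsupport ψ ⊆ Ioo a b ∧ HasCompactSupport ψ := by
      by_cases hK : tsupport w = ∅
      · have hw0 : ∀ t, w t = 0 := by
          intro t
          by_contra ht
          have : t ∈ tsupport w := subset_closure ht
          rw [hK] at this; exact this
        have hψ0 : ψ = fun _ => 0 := funext fun t => by
          have : EqOn w (fun _ => (0:ℝ)) (Set.uIcc a t) := fun τ _ => hw0 τ
          simp only [hψdef]
          rw [intervalIntegral.integral_congr this, intervalIntegral.integral_zero]
        rw [hψ0]
        constructor
        · rw [tsupport]
          simp
        · rw [HasCompactSupport, tsupport]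
          simp
      · have hKne : (tsupport w).Nonempty := nonempty_iff_ne_empty.2 hK
        have hKc : IsCompact (tsupport w) := hwcs
        set i := sInf (tsupport w) with hidef
        set s := sSup (tsupport w) with hsdef
        have hi : i ∈ tsupport w := hKc.sInf_mem hKne
        have hs : s ∈ tsupport w := hKc.sSup_mem hKne
        have hia : a < i := (hwsupp hi).1
        have hsb : s < b := (hwsupp hs).2
        have his : i ≤ s := le_csSup hKc.bddAbove hi
        have hw0 : ∀ τ, τ ∉ Icc i s → w τ = 0 := by
          intro τ hτ
          by_contra hw
          have hmem : τ ∈ tsupport w := subset_closure hw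
          exact hτ ⟨csInf_le hKc.bddBelow hmem, le_csSup hKc.bddAbove hmem⟩
        have hψ0 : ∀ t, t ∉ Icc i s → ψ t = 0 := by
          intro t ht
          simp only [mem_Icc, not_and_or, not_le] at ht
          rcases ht with ht | ht
          · have heq : EqOn w (fun _ => (0:ℝ)) (Set.uIcc a t) := by
              intro τ hτ
              have hτle : τ < i := by
                rcases mem_uIcc.1 hτ with ⟨_, h2⟩ | ⟨_, h2⟩
                · exact lt_of_le_of_lt h2 ht
                · exact lt_of_le_of_lt h2 hia
              exact hw0 τ (fun hmem => absurd hmem.1 (not_le.2 hτle))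
            simp only [hψdef]
            rw [intervalIntegral.integral_congr heq, intervalIntegral.integral_zero]
          · have hat : a ≤ t := by linarith
            have hcompl : ∀ x, x ∉ Ioc a t → w x = 0 := by
              intro x hx
              simp only [mem_Ioc, not_and_or, not_lt, not_le] at hx
              refine hw0 x (fun hmem => ?_)
              rcases hx with hx | hx
              · exact absurd hmem.1 (not_le.2 (lt_of_le_of_lt hx hia))
              · exact absurd hmem.2 (not_le.2 (lt_of_le_of_lt ht.le hx))
            simp only [hψdef]
            rw [intervalIntegral.integral_of_le hat,
              setIntegral_eq_integral_of_forall_compl_eq_zero hcompl, hwint]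
        have hsupp2 : tsupport ψ ⊆ Icc i s := by
          refine closure_minimal (fun t ht => ?_) isClosed_Icc
          by_contra hmem
          exact ht (hψ0 t hmem)
        refine ⟨hsupp2.trans (fun τ hτ => ⟨lt_of_lt_of_le hia hτ.1, lt_of_le_of_lt hτ.2 hsb⟩), ?_⟩
        exact IsCompact.of_isClosed_subset isCompact_Icc (isClosed_tsupport ψ) hsupp2
    have h0 := h ψ hψsm hψprops.2 hψprops.1
    rw [hψderiv] at h0
    have hgf : Integrable (fun t => g t * f t) := hmul g hgsm.continuous hgcs hgsub
    have hθf : Integrable (fun t => θ t * f t) := hmul θ hθc hθcs hθsupp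
    have hsplit : ∫ t, w t * f t = (∫ t, g t * f t) - I * ∫ t, θ t * f t := by
      have heq : (fun t => w t * f t) = fun t => g t * f t - I * (θ t * f t) :=
        funext fun t => by simp only [hwdef]; ring
      rw [heq, integral_sub hgf (hθf.const_mul I), integral_const_mul]
    rw [hsplit] at h0
    rw [hcdef]
    simp only [hIdef] at h0 ⊢
    linarith
  refine ⟨c, ?_⟩
  have hfin : volume (Ioo a b) ≠ ⊤ := (measure_Ioo_lt_top).ne
  have hio : IntegrableOn (fun t => f t - c) (Ioo a b) volume :=
    hf.sub (integrableOn_const hfin)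
  have hloc : LocallyIntegrableOn (fun t => f t - c) (Ioo a b) volume :=
    hio.locallyIntegrableOn
  have hae := (isOpen_Ioo (a := a) (b := b)).ae_eq_zero_of_integral_contDiff_smul_eq_zero hloc ?_
  · rw [ae_restrict_iff' measurableSet_Ioo]
    filter_upwards [hae] with t ht
    intro hmem
    have := ht hmem
    linarith
  · intro g hg hgc hgs
    have h1 : Integrable (fun t => g t * f t) := hmul g hg.continuous hgc hgs
    have h2 : Integrable (fun t => g t * c) :=
      (hg.continuous.integrable_of_hasCompactSupport hgc).mul_const c
    have heq : (fun t => g t • (f t - c)) = fun t => g t * f t - g t * c :=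
      funext fun t => by simp only [smul_eq_mul]; ring
    rw [heq, integral_sub h1 h2, key g hg hgc hgs, integral_mul_const]
    ring

lemma integral_deriv_mul_primitive {G₀ ψ : ℝ → ℝ} (hG : Integrable G₀)
    (hψ : ContDiff ℝ (⊤ : ℕ∞) ψ) (hψc : HasCompactSupport ψ) :
    ∫ t, deriv ψ t * (∫ τ in Iic t, G₀ τ) = - ∫ τ, ψ τ * G₀ τ := by
  have hψ'c : Continuous (deriv ψ) := hψ.continuous_deriv (mod_cast le_top)
  have hψ'int : Integrable (deriv ψ) := hψ'c.integrable_of_hasCompactSupport hψc.deriv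
  set S : Set (ℝ × ℝ) := {p : ℝ × ℝ | p.2 ≤ p.1} with hSdef
  have hS : MeasurableSet S := measurableSet_le measurable_snd measurable_fst
  set F : ℝ × ℝ → ℝ := fun p => deriv ψ p.1 * G₀ p.2 with hFdef
  have hF : Integrable F (volume.prod volume) := hψ'int.mul_prod hG
  have hFS : Integrable (S.indicator F) (volume.prod volume) := hF.indicator hS
  have hswap : ∫ t, ∫ τ, S.indicator F (t, τ) = ∫ τ, ∫ t, S.indicator F (t, τ) :=
    integral_integral_swap (by exact hFS)
  calc ∫ t, deriv ψ t * ∫ τ in Iic t, G₀ τ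
      = ∫ t, ∫ τ, S.indicator F (t, τ) := by
        refine integral_congr_ae (ae_of_all _ fun t => ?_)
        dsimp only
        rw [← integral_indicator measurableSet_Iic, ← integral_const_mul]
        refine integral_congr_ae (ae_of_all _ fun τ => ?_)
        by_cases hτ : τ ≤ t <;>
          simp [Set.indicator_apply, hSdef, hFdef, mem_Iic, hτ]
    _ = ∫ τ, ∫ t, S.indicator F (t, τ) := hswap
    _ = ∫ τ, (-ψ τ) * G₀ τ := by
        refine integral_congr_ae (ae_of_all _ fun τ => ?_)
        dsimp only
        have h1 : (fun t => S.indicator F (t, τ)) =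
            (Ici τ).indicator (fun t => deriv ψ t * G₀ τ) := by
          funext t
          by_cases hτ : τ ≤ t <;>
            simp [Set.indicator_apply, hSdef, hFdef, mem_Ici, hτ]
        rw [h1, integral_indicator measurableSet_Ici, integral_mul_const,
          integral_Ici_eq_integral_Ioi,
          hψc.integral_Ioi_deriv_eq (hψ.of_le (mod_cast le_top)) τ]
    _ = - ∫ τ, ψ τ * G₀ τ := by
        rw [← integral_neg]
        refine integral_congr_ae (ae_of_all _ fun τ => ?_)
        dsimp only
        ring

lemma abs_int_le {α : Type*} [MeasurableSpace α] (μ : MeasureTheory.Measure α) (f : α → ℝ) :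
    |∫ x, f x ∂μ| ≤ ∫ x, |f x| ∂μ := by
  simpa [Real.norm_eq_abs] using MeasureTheory.norm_integral_le_integral_norm (μ := μ) f

set_option maxHeartbeats 2000000 in
/-- **Step 3 of the proof of Theorem 1: transfer of spatial regularity to time regularity
through the equation.** -/
theorem stmt15 (M : ℝ) (hM : 0 ≤ M) (η : ℝ → ℝ)
    (hηs : ContDiff ℝ (⊤ : ℕ∞) η) (hηc : HasCompactSupport η)
    (hηsupp : tsupport η ⊆ Ioo (-1) 1) (hηint : ∫ x, η x = 1) :
    ∃ C > 0, ∀ (Ω : Set (ℝ × ℝ)), IsOpen Ω → ∀ r : ℝ, 0 < r →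
      Icc (-(2 * r)) (2 * r) ×ˢ Icc (-(2 * r)) (2 * r) ⊆ Ω →
      ∀ u : ℝ × ℝ → ℝ, Measurable u → (∀ z ∈ Ω, |u z| ≤ M) → IsWeakBurgers Ω u →
        (⨍ s in Icc (-r) r, ⨍ t in Icc (-r) r,
            |∫ x, (u (s, x) - u (t, x)) * (r⁻¹ * η (x / r))|)
          ≤ C * ⨍ t in Icc (-r) r, ⨍ x in Icc (-r) r, ⨍ y in Icc (-r) r,
              |u (t, x) - u (t, y)| := by
  obtain ⟨A, hA⟩ := hηc.exists_bound_of_continuous hηs.continuous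
  obtain ⟨B, hB⟩ := hηc.deriv.exists_bound_of_continuous
    (hηs.continuous_deriv (mod_cast le_top))
  have hA0 : 0 ≤ A := le_trans (norm_nonneg _) (hA 0)
  have hB0 : 0 ≤ B := le_trans (norm_nonneg _) (hB 0)
  have hAb : ∀ x, |η x| ≤ A := fun x => by simpa [Real.norm_eq_abs] using hA x
  have hBb : ∀ x, |deriv η x| ≤ B := fun x => by simpa [Real.norm_eq_abs] using hB x
  refine ⟨4 * M * B + 1, by nlinarith, ?_⟩
  intro Ω hΩ r hr hsub u hum hub hweak
  set ζ : ℝ → ℝ := fun x => r⁻¹ * η (x / r) with hζdef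
  have hrinv : (0:ℝ) < r⁻¹ := inv_pos.2 hr
  -- derivative of ζ
  have hηd : Differentiable ℝ η := hηs.differentiable (by simp)
  have hζderiv : ∀ x, HasDerivAt ζ (r⁻¹ * (deriv η (x / r) * r⁻¹)) x := by
    intro x
    have h1 : HasDerivAt (fun y : ℝ => y / r) (1 / r) x := by
      simpa using (hasDerivAt_id x).div_const r
    have h2 : HasDerivAt (fun y : ℝ => η (y / r)) (deriv η (x / r) * (1 / r)) x :=
      (hηd (x / r)).hasDerivAt.comp x h1
    simpa [one_div] using h2.const_mul r⁻¹
  have hζ'eq : deriv ζ = fun x => r⁻¹ * (deriv η (x / r) * r⁻¹) :=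
    funext fun x => (hζderiv x).deriv
  set Bζ : ℝ := r⁻¹ * B * r⁻¹ with hBζdef
  have hBζ0 : 0 ≤ Bζ := by positivity
  have hζ'b : ∀ x, |deriv ζ x| ≤ Bζ := by
    intro x
    rw [hζ'eq]
    calc |r⁻¹ * (deriv η (x / r) * r⁻¹)| = r⁻¹ * |deriv η (x / r)| * r⁻¹ := by
          rw [abs_mul, abs_mul, abs_of_pos hrinv]; ring
      _ ≤ r⁻¹ * B * r⁻¹ := by
          have := hBb (x / r); gcongr
  have hζb : ∀ x, |ζ x| ≤ r⁻¹ * A := by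
    intro x
    rw [hζdef]
    calc |r⁻¹ * η (x / r)| = r⁻¹ * |η (x / r)| := by rw [abs_mul, abs_of_pos hrinv]
      _ ≤ r⁻¹ * A := by have := hAb (x / r); gcongr
  -- support of ζ
  have hsupp1 : Function.support ζ ⊆ (fun y => r * y) '' tsupport η := by
    intro x hx
    have hη : η (x / r) ≠ 0 := by
      intro h0
      apply hx
      simp [hζdef, h0]
    exact ⟨x / r, subset_closure hη, by field_simp⟩
  have hKcomp : IsCompact ((fun y => r * y) '' tsupport η) :=
    hηc.image (continuous_const.mul continuous_id)
  have hζsuppK : tsupport ζ ⊆ (fun y => r * y) '' tsupport η :=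
    closure_minimal hsupp1 hKcomp.isClosed
  have himg : (fun y => r * y) '' tsupport η ⊆ Ioo (-r) r := by
    rintro _ ⟨y, hy, rfl⟩
    have h1 := hηsupp hy
    simp only [mem_Ioo] at h1 ⊢
    refine ⟨?_, ?_⟩
    · nlinarith [mul_pos hr (show (0:ℝ) < y + 1 by linarith [h1.1])]
    · nlinarith [mul_pos hr (show (0:ℝ) < 1 - y by linarith [h1.2])]
  have hζsupp : tsupport ζ ⊆ Ioo (-r) r := hζsuppK.trans himg
  have hζcs : HasCompactSupport ζ :=
    IsCompact.of_isClosed_subset hKcomp (isClosed_tsupport ζ) hζsuppK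
  have hζ0 : ∀ x, x ∉ Ioo (-r) r → ζ x = 0 := fun x hx =>
    image_eq_zero_of_notMem_tsupport fun h => hx (hζsupp h)
  have hζ'0 : ∀ x, x ∉ Ioo (-r) r → deriv ζ x = 0 := by
    intro x hx
    have : x ∉ Function.support (deriv ζ) := fun h => hx (hζsupp (support_deriv_subset h))
    exact Function.notMem_support.1 this
  have hζsm : ContDiff ℝ (⊤ : ℕ∞) ζ :=
    contDiff_const.mul (hηs.comp (contDiff_id.div_const r))
  have hζcont : Continuous ζ := hζsm.continuous
  have hζ'cont : Continuous (deriv ζ) := hζsm.continuous_deriv (mod_cast le_top)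
  have hζ'int : Integrable (deriv ζ) := hζ'cont.integrable_of_hasCompactSupport hζcs.deriv
  have hζ'sum : ∫ x, deriv ζ x = 0 := by
    have h1 := hζcs.integral_Iic_deriv_eq (hζsm.of_le (mod_cast le_top)) (0:ℝ)
    have h2 := hζcs.integral_Ioi_deriv_eq (hζsm.of_le (mod_cast le_top)) (0:ℝ)
    have h3 := integral_add_compl (measurableSet_Iic (a := (0:ℝ))) hζ'int (f := deriv ζ)
    rw [compl_Iic] at h3
    rw [← h3, h1, h2]
    ring
  -- boxes and measures
  have hbox : ∀ t x : ℝ, t ∈ Icc (-(2*r)) (2*r) → x ∈ Icc (-(2*r)) (2*r) → |u (t, x)| ≤ M :=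
    fun t x ht hx => hub (t, x) (hsub ⟨ht, hx⟩)
  have hIccIcc : Icc (-r) r ⊆ Icc (-(2*r)) (2*r) := Icc_subset_Icc (by linarith) (by linarith)
  have hIooIcc : Ioo (-r) r ⊆ Icc (-(2*r)) (2*r) := fun x hx =>
    ⟨by linarith [hx.1], by linarith [hx.2]⟩
  have hIoo2Icc : Ioo (-(2*r)) (2*r) ⊆ Icc (-(2*r)) (2*r) := Ioo_subset_Icc_self
  have hIccIoo2 : Icc (-r) r ⊆ Ioo (-(2*r)) (2*r) := fun x hx =>
    ⟨by linarith [hx.1], by linarith [hx.2]⟩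
  have hvIcc : (volume (Icc (-r) r)).toReal = 2*r := by
    rw [Real.volume_Icc, ENNReal.toReal_ofReal (by linarith)]; ring
  have hvIccne : volume (Icc (-r) r) ≠ ⊤ := by rw [Real.volume_Icc]; exact ENNReal.ofReal_ne_top
  have hvIcc0 : volume (Icc (-r) r) ≠ 0 := by
    rw [Real.volume_Icc]
    simp only [ne_eq, ENNReal.ofReal_eq_zero, not_le]
    linarith
  have hvIoo : (volume (Ioo (-r) r)).toReal = 2*r := by
    rw [Real.volume_Ioo, ENNReal.toReal_ofReal (by linarith)]; ring
  have hvIoone : volume (Ioo (-r) r) ≠ ⊤ := by rw [Real.volume_Ioo]; exact ENNReal.ofReal_ne_top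
  have hvIoo2ne : volume (Ioo (-(2*r)) (2*r)) ≠ ⊤ := by
    rw [Real.volume_Ioo]; exact ENNReal.ofReal_ne_top
  -- the space and flux averages against the weight
  set F : ℝ → ℝ := fun t => ∫ x, u (t, x) * ζ x with hFdef
  set G : ℝ → ℝ := fun t => ∫ x, u (t, x) ^ 2 / 2 * deriv ζ x with hGdef
  set G₀ : ℝ → ℝ := (Ioo (-(2*r)) (2*r)).indicator G with hG₀def
  set H : ℝ → ℝ := fun t => ∫ τ in Iic t, G₀ τ with hHdef
  have hFm : StronglyMeasurable F := by
    have h : StronglyMeasurable (fun p : ℝ × ℝ => u p * ζ p.2) :=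
      (hum.mul (hζcont.measurable.comp measurable_snd)).stronglyMeasurable
    exact h.integral_prod_right'
  have hGm : StronglyMeasurable G := by
    have h : StronglyMeasurable (fun p : ℝ × ℝ => u p ^ 2 / 2 * deriv ζ p.2) :=
      (((hum.pow_const 2).div_const 2).mul
        (hζ'cont.measurable.comp measurable_snd)).stronglyMeasurable
    exact h.integral_prod_right'
  have hG₀m : StronglyMeasurable G₀ := hGm.indicator measurableSet_Ioo
  have hHm : StronglyMeasurable H := by
    have hjoint : StronglyMeasurable (fun p : ℝ × ℝ => (Iic p.1).indicator G₀ p.2) := by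
      have heq : (fun p : ℝ × ℝ => (Iic p.1).indicator G₀ p.2)
          = {p : ℝ × ℝ | p.2 ≤ p.1}.indicator (fun p => G₀ p.2) := by
        funext p
        by_cases hp : p.2 ≤ p.1 <;> simp [Set.indicator_apply, hp, mem_Iic]
      rw [heq]
      exact ((hG₀m.measurable.comp measurable_snd).indicator
        (measurableSet_le measurable_snd measurable_fst)).stronglyMeasurable
    have heq2 : H = fun t => ∫ τ, (Iic t).indicator G₀ τ := by
      funext t
      rw [hHdef]
      exact (integral_indicator measurableSet_Iic).symm
    rw [heq2]
    exact hjoint.integral_prod_right'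
  -- pointwise bound for the flux kernel
  set CG : ℝ := M ^ 2 / 2 * Bζ * (2*r) with hCGdef
  have hCG0 : 0 ≤ CG := by positivity
  have hptG : ∀ t ∈ Icc (-(2*r)) (2*r), ∀ x ∈ Ioo (-r) r,
      |u (t, x) ^ 2 / 2 * deriv ζ x| ≤ M ^ 2 / 2 * Bζ := by
    intro t ht x hx
    have h1 : |u (t, x)| ≤ M := hbox t x ht (hIooIcc hx)
    have h2 := hζ'b x
    rw [abs_mul, abs_div, abs_pow]
    have habs2 : |(2:ℝ)| = 2 := by norm_num
    rw [habs2]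
    have h3 : |u (t, x)| ^ 2 ≤ M ^ 2 := by nlinarith [abs_nonneg (u (t, x))]
    exact mul_le_mul (by linarith) h2 (abs_nonneg _) (by positivity)
  have huxm : ∀ t : ℝ, Measurable (fun x => u (t, x)) := fun t =>
    hum.comp (measurable_const.prodMk measurable_id)
  have hGker_int : ∀ t ∈ Icc (-(2*r)) (2*r),
      Integrable (fun x => u (t, x) ^ 2 / 2 * deriv ζ x) := by
    intro t ht
    refine integrable_of_bdd_supp ?_ measurableSet_Ioo hvIoone (M ^ 2 / 2 * Bζ)
      (fun x hx => hptG t ht x hx) (fun x hx => by rw [hζ'0 x hx, mul_zero])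
    exact ((((huxm t).pow_const 2).div_const 2).mul hζ'cont.measurable).aestronglyMeasurable
  have hGb : ∀ t ∈ Icc (-(2*r)) (2*r), |G t| ≤ CG := by
    intro t ht
    have hint := hGker_int t ht
    calc |G t| ≤ ∫ x, |u (t, x) ^ 2 / 2 * deriv ζ x| := abs_int_le _ _
      _ = ∫ x in Ioo (-r) r, |u (t, x) ^ 2 / 2 * deriv ζ x| := by
          symm
          apply setIntegral_eq_integral_of_forall_compl_eq_zero
          intro x hx
          rw [hζ'0 x hx, mul_zero, abs_zero]
      _ ≤ (M ^ 2 / 2 * Bζ) * (volume (Ioo (-r) r)).toReal := by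
          apply setIntegral_le_of_ae hvIoone hint.abs.integrableOn
          refine (ae_restrict_iff' measurableSet_Ioo).2 (ae_of_all _ fun x hx => ?_)
          exact hptG t ht x hx
      _ = CG := by rw [hvIoo, hCGdef]
  have hG₀int : Integrable G₀ := by
    refine integrable_of_bdd_supp hG₀m.aestronglyMeasurable measurableSet_Ioo hvIoo2ne CG ?_ ?_
    · intro t ht
      rw [hG₀def, indicator_of_mem ht]
      exact hGb t (hIoo2Icc ht)
    · intro t ht
      rw [hG₀def, indicator_of_notMem ht]
  set NG : ℝ := ∫ τ, |G₀ τ| with hNGdef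
  have hNG0 : 0 ≤ NG := integral_nonneg fun τ => abs_nonneg _
  have hHb : ∀ t, |H t| ≤ NG := by
    intro t
    calc |H t| ≤ ∫ τ in Iic t, |G₀ τ| := abs_int_le _ _
      _ ≤ NG := setIntegral_le_integral hG₀int.abs (ae_of_all _ fun τ => abs_nonneg _)
  -- bounds for the F kernel
  have hptF : ∀ t ∈ Icc (-(2*r)) (2*r), ∀ x ∈ Ioo (-r) r,
      |u (t, x) * ζ x| ≤ M * (r⁻¹ * A) := by
    intro t ht x hx
    have h1 : |u (t, x)| ≤ M := hbox t x ht (hIooIcc hx)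
    rw [abs_mul]
    exact mul_le_mul h1 (hζb x) (abs_nonneg _) hM
  have hFker_int : ∀ t ∈ Icc (-(2*r)) (2*r), Integrable (fun x => u (t, x) * ζ x) := by
    intro t ht
    refine integrable_of_bdd_supp ?_ measurableSet_Ioo hvIoone (M * (r⁻¹ * A))
      (fun x hx => hptF t ht x hx) (fun x hx => by rw [hζ0 x hx, mul_zero])
    exact ((huxm t).mul hζcont.measurable).aestronglyMeasurable
  set CF : ℝ := M * (r⁻¹ * A) * (2*r) with hCFdef
  have hFb : ∀ t ∈ Icc (-(2*r)) (2*r), |F t| ≤ CF := by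
    intro t ht
    have hint := hFker_int t ht
    calc |F t| ≤ ∫ x, |u (t, x) * ζ x| := abs_int_le _ _
      _ = ∫ x in Ioo (-r) r, |u (t, x) * ζ x| := by
          symm
          apply setIntegral_eq_integral_of_forall_compl_eq_zero
          intro x hx
          rw [hζ0 x hx, mul_zero, abs_zero]
      _ ≤ (M * (r⁻¹ * A)) * (volume (Ioo (-r) r)).toReal := by
          apply setIntegral_le_of_ae hvIoone hint.abs.integrableOn
          exact (ae_restrict_iff' measurableSet_Ioo).2 (ae_of_all _ fun x hx => hptF t ht x hx)
      _ = CF := by rw [hvIoo, hCFdef]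
  -- weak formulation in 1D: for every test function ψ on (-2r, 2r)
  have hweak1 : ∀ ψ : ℝ → ℝ, ContDiff ℝ (⊤ : ℕ∞) ψ → HasCompactSupport ψ →
      tsupport ψ ⊆ Ioo (-(2*r)) (2*r) →
      ∫ t, (deriv ψ t * F t + ψ t * G t) = 0 := by
    intro ψ hψsm hψcs hψsupp
    obtain ⟨Bψ, hBψn⟩ := hψcs.exists_bound_of_continuous hψsm.continuous
    obtain ⟨Bψ', hBψ'n⟩ := hψcs.deriv.exists_bound_of_continuous
      (hψsm.continuous_deriv (mod_cast le_top))
    have hBψ : ∀ t, |ψ t| ≤ Bψ := fun t => by simpa [Real.norm_eq_abs] using hBψn t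
    have hBψ' : ∀ t, |deriv ψ t| ≤ Bψ' := fun t => by simpa [Real.norm_eq_abs] using hBψ'n t
    have hBψ0 : 0 ≤ Bψ := (abs_nonneg _).trans (hBψ 0)
    have hBψ'0 : 0 ≤ Bψ' := (abs_nonneg _).trans (hBψ' 0)
    have hψ0 : ∀ t, t ∉ Icc (-(2*r)) (2*r) → ψ t = 0 := fun t ht =>
      image_eq_zero_of_notMem_tsupport fun hmem => ht (hIoo2Icc (hψsupp hmem))
    have hψ'0 : ∀ t, t ∉ Icc (-(2*r)) (2*r) → deriv ψ t = 0 := fun t ht =>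
      Function.notMem_support.1 fun hmem =>
        ht (hIoo2Icc (hψsupp (support_deriv_subset hmem)))
    set φ : ℝ × ℝ → ℝ := fun z => ψ z.1 * ζ z.2 with hφdef
    have hφtest : IsTestFun Ω φ := by
      refine ⟨(hψsm.comp contDiff_fst).mul (hζsm.comp contDiff_snd),
        hcs_prodfun hψcs hζcs, ?_⟩
      exact tsupport_prodfun.trans
        ((prod_mono (hψsupp.trans hIoo2Icc) (hζsupp.trans hIooIcc)).trans hsub)
    have h0 := hweak φ hφtest
    set W : ℝ × ℝ → ℝ := fun z =>
      u z * (deriv ψ z.1 * ζ z.2) + u z ^ 2 / 2 * (ψ z.1 * deriv ζ z.2) with hWdef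
    have hWzero : ∀ z : ℝ × ℝ, z ∉ (Icc (-(2*r)) (2*r) ×ˢ Icc (-(2*r)) (2*r)) → W z = 0 := by
      intro z hz
      rw [mem_prod] at hz
      by_cases h1 : z.1 ∈ Icc (-(2*r)) (2*r)
      · have h2 : z.2 ∉ Icc (-(2*r)) (2*r) := fun h2 => hz ⟨h1, h2⟩
        have h2' : z.2 ∉ Ioo (-r) r := fun hh => h2 (hIooIcc hh)
        rw [hWdef]
        dsimp only
        rw [hζ0 _ h2', hζ'0 _ h2']
        ring
      · rw [hWdef]
        dsimp only
        rw [hψ0 _ h1, hψ'0 _ h1]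
        ring
    have hstep1 : ∫ z in Ω, (u z * pdt φ z + u z ^ 2 / 2 * pdx φ z) = ∫ z in Ω, W z := by
      refine integral_congr_ae (ae_of_all _ fun z => ?_)
      rw [hWdef]
      dsimp only
      rw [pdt_prodfun hψsm hζsm z, pdx_prodfun hψsm hζsm z]
    have hstep2 : ∫ z in Ω, W z = ∫ z, W z :=
      setIntegral_eq_integral_of_forall_compl_eq_zero fun z hz =>
        hWzero z (fun hmem => hz (hsub hmem))
    have hWm : Measurable W := by
      refine Measurable.add ?_ ?_
      · exact hum.mul (((hψsm.continuous_deriv (mod_cast le_top)).measurable.comp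
          measurable_fst).mul (hζcont.measurable.comp measurable_snd))
      · exact ((hum.pow_const 2).div_const 2).mul
          ((hψsm.continuous.measurable.comp measurable_fst).mul
            (hζ'cont.measurable.comp measurable_snd))
    set CW : ℝ := M * (Bψ' * (r⁻¹ * A)) + M ^ 2 / 2 * (Bψ * Bζ) with hCWdef
    have hWb : ∀ z ∈ (Icc (-(2*r)) (2*r) ×ˢ Icc (-(2*r)) (2*r)), |W z| ≤ CW := by
      intro z hz
      rw [mem_prod] at hz
      have hu : |u z| ≤ M := by
        have := hbox z.1 z.2 hz.1 hz.2
        rwa [Prod.mk.eta] at this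
      have e1 : |u z * (deriv ψ z.1 * ζ z.2)| ≤ M * (Bψ' * (r⁻¹ * A)) := by
        rw [abs_mul, abs_mul]
        exact mul_le_mul hu (mul_le_mul (hBψ' z.1) (hζb z.2) (abs_nonneg _) hBψ'0)
          (by positivity) hM
      have e2 : |u z ^ 2 / 2 * (ψ z.1 * deriv ζ z.2)| ≤ M ^ 2 / 2 * (Bψ * Bζ) := by
        rw [abs_mul, abs_mul, abs_div, abs_pow]
        have habs2 : |(2:ℝ)| = 2 := by norm_num
        rw [habs2]
        have h3 : |u z| ^ 2 ≤ M ^ 2 := by nlinarith [abs_nonneg (u z)]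
        exact mul_le_mul (by linarith) (mul_le_mul (hBψ z.1) (hζ'b z.2) (abs_nonneg _) hBψ0)
          (by positivity) (by positivity)
      calc |W z| ≤ |u z * (deriv ψ z.1 * ζ z.2)| + |u z ^ 2 / 2 * (ψ z.1 * deriv ζ z.2)| := by
            rw [hWdef]
            exact abs_add_le _ _
        _ ≤ CW := by rw [hCWdef]; exact add_le_add e1 e2
    have hboxfin : volume (Icc (-(2*r)) (2*r) ×ˢ Icc (-(2*r)) (2*r)) ≠ ⊤ :=
      (IsCompact.measure_lt_top (isCompact_Icc.prod isCompact_Icc)).ne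
    have hWint : Integrable W :=
      integrable_of_bdd_supp hWm.aestronglyMeasurable
        (measurableSet_Icc.prod measurableSet_Icc) hboxfin CW hWb hWzero
    have hWint' : Integrable W ((volume : Measure ℝ).prod (volume : Measure ℝ)) := by
      rwa [← Measure.volume_eq_prod]
    have hfub : ∫ z, W z = ∫ t, ∫ x, W (t, x) := by
      rw [Measure.volume_eq_prod]
      exact integral_prod W hWint'
    have hslice : ∀ t, ∫ x, W (t, x) = deriv ψ t * F t + ψ t * G t := by
      intro t
      by_cases ht : t ∈ Icc (-(2*r)) (2*r)
      · have hint1 : Integrable (fun x => u (t, x) * ζ x) := hFker_int t ht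
        have hint2 : Integrable (fun x => u (t, x) ^ 2 / 2 * deriv ζ x) := hGker_int t ht
        have heq : (fun x => W (t, x)) = fun x =>
            deriv ψ t * (u (t, x) * ζ x) + ψ t * (u (t, x) ^ 2 / 2 * deriv ζ x) := by
          funext x
          rw [hWdef]
          dsimp only
          ring
        rw [heq, integral_add (hint1.const_mul _) (hint2.const_mul _),
          integral_const_mul, integral_const_mul]
      · have h1 : ψ t = 0 := hψ0 t ht
        have h2 : deriv ψ t = 0 := hψ'0 t ht
        have heq : (fun x => W (t, x)) = fun _ => (0:ℝ) := by
          funext x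
          rw [hWdef]
          dsimp only
          rw [h1, h2]
          ring
        rw [heq, h1, h2]
        simp
    calc ∫ t, (deriv ψ t * F t + ψ t * G t) = ∫ t, ∫ x, W (t, x) :=
          integral_congr_ae (ae_of_all _ fun t => (hslice t).symm)
      _ = ∫ z, W z := hfub.symm
      _ = ∫ z in Ω, W z := hstep2.symm
      _ = 0 := by rw [← hstep1]; exact h0
  have htri : ∀ a b : ℝ, |a - b| ≤ |a| + |b| := fun a b => by
    rw [sub_eq_add_neg]
    simpa [abs_neg] using abs_add_le a (-b)
  -- integrability of cutoffs against bounded measurable functions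
  have hcut_int : ∀ (g v : ℝ → ℝ) (c : ℝ), Continuous g → HasCompactSupport g →
      tsupport g ⊆ Ioo (-(2*r)) (2*r) → StronglyMeasurable v →
      (∀ t ∈ Icc (-(2*r)) (2*r), |v t| ≤ c) → Integrable (fun t => g t * v t) := by
    intro g v c hgc hgcs hgsupp hvm hvb
    obtain ⟨Bg, hBg⟩ := hgcs.exists_bound_of_continuous hgc
    have hBg0 : 0 ≤ Bg := (norm_nonneg _).trans (hBg 0)
    refine integrable_of_bdd_supp (hgc.measurable.mul hvm.measurable).aestronglyMeasurable
      measurableSet_Ioo hvIoo2ne (Bg * c) ?_ ?_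
    · intro t ht
      rw [abs_mul]
      exact mul_le_mul (by simpa [Real.norm_eq_abs] using hBg t) (hvb t (hIoo2Icc ht))
        (abs_nonneg _) hBg0
    · intro t ht
      have hg0 : g t = 0 := image_eq_zero_of_notMem_tsupport fun hm => ht (hgsupp hm)
      rw [hg0, zero_mul]
  -- F - H has vanishing weak derivative on (-2r, 2r)
  have hweakFH : ∀ ψ : ℝ → ℝ, ContDiff ℝ (⊤ : ℕ∞) ψ → HasCompactSupport ψ →
      tsupport ψ ⊆ Ioo (-(2*r)) (2*r) →
      ∫ t, deriv ψ t * (F t - H t) = 0 := by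
    intro ψ hψsm hψcs hψsupp
    have hψ'c : Continuous (deriv ψ) := hψsm.continuous_deriv (mod_cast le_top)
    have hψ'supp : tsupport (deriv ψ) ⊆ Ioo (-(2*r)) (2*r) :=
      (closure_minimal support_deriv_subset (isClosed_tsupport ψ)).trans hψsupp
    have hint1 : Integrable (fun t => deriv ψ t * F t) :=
      hcut_int (deriv ψ) F CF hψ'c hψcs.deriv hψ'supp hFm hFb
    have hintH : Integrable (fun t => deriv ψ t * H t) :=
      hcut_int (deriv ψ) H NG hψ'c hψcs.deriv hψ'supp hHm (fun t _ => hHb t)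
    have hintG : Integrable (fun t => ψ t * G t) :=
      hcut_int ψ G CG hψsm.continuous hψcs hψsupp hGm hGb
    have hw1 := hweak1 ψ hψsm hψcs hψsupp
    have hsplit : ∫ t, (deriv ψ t * F t + ψ t * G t)
        = (∫ t, deriv ψ t * F t) + ∫ t, ψ t * G t := integral_add hint1 hintG
    have hFG : ∫ t, deriv ψ t * F t = - ∫ t, ψ t * G t := by
      rw [hsplit] at hw1
      linarith
    have hprim : ∫ t, deriv ψ t * H t = - ∫ τ, ψ τ * G₀ τ :=
      integral_deriv_mul_primitive hG₀int hψsm hψcs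
    have hGG₀ : ∫ τ, ψ τ * G₀ τ = ∫ t, ψ t * G t := by
      refine integral_congr_ae (ae_of_all _ fun t => ?_)
      by_cases ht : t ∈ Ioo (-(2*r)) (2*r)
      · rw [hG₀def]
        dsimp only
        rw [indicator_of_mem ht]
      · have hp0 : ψ t = 0 := image_eq_zero_of_notMem_tsupport fun hm => ht (hψsupp hm)
        dsimp only
        rw [hp0, zero_mul, zero_mul]
    have hsub2 : ∫ t, deriv ψ t * (F t - H t)
        = (∫ t, deriv ψ t * F t) - ∫ t, deriv ψ t * H t := by
      rw [← integral_sub hint1 hintH]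
      refine integral_congr_ae (ae_of_all _ fun t => ?_)
      dsimp only
      ring
    rw [hsub2, hFG, hprim, hGG₀]
    ring
  -- the constancy of F - H on (-2r, 2r)
  have hFHint : IntegrableOn (fun t => F t - H t) (Ioo (-(2*r)) (2*r)) := by
    refine integrableOn_of_bdd measurableSet_Ioo ?_ hvIoo2ne (CF + NG) ?_
    · exact (hFm.sub hHm).aestronglyMeasurable.restrict
    · intro t ht
      exact (htri (F t) (H t)).trans (add_le_add (hFb t (hIoo2Icc ht)) (hHb t))
  obtain ⟨c, hc⟩ := exists_const_of_weak_deriv_zero (by linarith : -(2*r) < 2*r) hFHint hweakFH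
  have hc' : ∀ᵐ t ∂(volume.restrict (Icc (-r) r)), F t - H t = c :=
    ae_restrict_of_ae_restrict_of_subset hIccIoo2 hc
  -- oscillation of H over [-r, r]
  set K0 : ℝ := ∫ τ in Icc (-r) r, |G₀ τ| with hK0def
  have hK00 : 0 ≤ K0 := setIntegral_nonneg measurableSet_Icc fun τ _ => abs_nonneg _
  have hHK' : ∀ s t : ℝ, t ≤ s → s ∈ Icc (-r) r → t ∈ Icc (-r) r → |H s - H t| ≤ K0 := by
    intro s t hts hs ht
    have hsplit : H s - H t = ∫ τ in Ioc t s, G₀ τ := by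
      rw [hHdef]
      dsimp only
      rw [← Iic_union_Ioc_eq_Iic hts, setIntegral_union (Iic_disjoint_Ioc le_rfl)
        measurableSet_Ioc hG₀int.integrableOn hG₀int.integrableOn]
      ring
    rw [hsplit]
    calc |∫ τ in Ioc t s, G₀ τ| ≤ ∫ τ in Ioc t s, |G₀ τ| := abs_int_le _ _
      _ ≤ ∫ τ in Icc (-r) r, |G₀ τ| := by
          refine setIntegral_mono_set hG₀int.abs.integrableOn
            (ae_of_all _ fun τ => abs_nonneg _) (HasSubset.Subset.eventuallyLE ?_)
          intro τ hτ
          exact ⟨by linarith [ht.1, hτ.1], by linarith [hs.2, hτ.2]⟩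
      _ = K0 := rfl
  have hHK : ∀ s t : ℝ, s ∈ Icc (-r) r → t ∈ Icc (-r) r → |H s - H t| ≤ K0 := by
    intro s t hs ht
    rcases le_total t s with h | h
    · exact hHK' s t h hs ht
    · rw [abs_sub_comm]
      exact hHK' t s h ht hs
  have hpair_eq : ∀ s t : ℝ, s ∈ Icc (-r) r → t ∈ Icc (-r) r →
      ∫ x, (u (s, x) - u (t, x)) * ζ x = F s - F t := by
    intro s t hs ht
    rw [hFdef]
    dsimp only
    rw [← integral_sub (hFker_int s (hIccIcc hs)) (hFker_int t (hIccIcc ht))]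
    refine integral_congr_ae (ae_of_all _ fun x => ?_)
    ring
  have houter : ∀ᵐ s ∂(volume.restrict (Icc (-r) r)),
      (⨍ t in Icc (-r) r, |∫ x, (u (s, x) - u (t, x)) * ζ x|) ≤ K0 := by
    filter_upwards [hc', ae_restrict_mem measurableSet_Icc] with s hFs hsmem
    refine avg_le_of_ae' hvIcc0 hvIccne hK00 ?_
    filter_upwards [hc', ae_restrict_mem measurableSet_Icc] with t hFt htmem
    rw [hpair_eq s t hsmem htmem]
    have hFs' : F s = H s + c := by linarith
    have hFt' : F t = H t + c := by linarith
    rw [hFs', hFt', show H s + c - (H t + c) = H s - H t from by ring]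
    exact hHK s t hsmem htmem
  have hLHS : (⨍ s in Icc (-r) r, ⨍ t in Icc (-r) r,
      |∫ x, (u (s, x) - u (t, x)) * ζ x|) ≤ K0 :=
    avg_le_of_ae' hvIcc0 hvIccne hK00 houter
  -- spatial oscillation quantities
  set J : ℝ → ℝ := fun τ => ∫ x in Icc (-r) r, ∫ y in Icc (-r) r, |u (τ, x) - u (τ, y)|
    with hJdef
  have hinm : ∀ τ : ℝ, StronglyMeasurable
      (fun x => ∫ y in Icc (-r) r, |u (τ, x) - u (τ, y)|) := by
    intro τ
    have h1 : StronglyMeasurable (fun q : ℝ × ℝ => |u (τ, q.1) - u (τ, q.2)|) :=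
      ((((huxm τ).comp measurable_fst).sub
        ((huxm τ).comp measurable_snd)).abs).stronglyMeasurable
    exact h1.integral_prod_right'
  have hin0 : ∀ τ x : ℝ, 0 ≤ ∫ y in Icc (-r) r, |u (τ, x) - u (τ, y)| := fun τ x =>
    setIntegral_nonneg measurableSet_Icc fun y _ => abs_nonneg _
  have hΔb : ∀ τ ∈ Icc (-r) r, ∀ x ∈ Icc (-r) r, ∀ y ∈ Icc (-r) r,
      |u (τ, x) - u (τ, y)| ≤ 2*M := by
    intro τ hτ x hx y hy
    have h1 : |u (τ, x)| ≤ M := hbox τ x (hIccIcc hτ) (hIccIcc hx)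
    have h2 : |u (τ, y)| ≤ M := hbox τ y (hIccIcc hτ) (hIccIcc hy)
    exact (htri _ _).trans (by linarith)
  have hinint : ∀ τ ∈ Icc (-r) r, ∀ x ∈ Icc (-r) r,
      IntegrableOn (fun y => |u (τ, x) - u (τ, y)|) (Icc (-r) r) := by
    intro τ hτ x hx
    refine integrableOn_of_bdd measurableSet_Icc
      ((measurable_const.sub (huxm τ)).abs).aestronglyMeasurable.restrict hvIccne (2*M) ?_
    intro y hy
    rw [abs_abs]
    exact hΔb τ hτ x hx y hy
  have hinb : ∀ τ ∈ Icc (-r) r, ∀ x ∈ Icc (-r) r,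
      (∫ y in Icc (-r) r, |u (τ, x) - u (τ, y)|) ≤ 2*M*(2*r) := by
    intro τ hτ x hx
    have := setIntegral_le_of_ae hvIccne (hinint τ hτ x hx)
      ((ae_restrict_iff' measurableSet_Icc).2 (ae_of_all _ fun y hy => hΔb τ hτ x hx y hy))
    rwa [hvIcc] at this
  have hJ0 : ∀ τ, 0 ≤ J τ := fun τ =>
    setIntegral_nonneg measurableSet_Icc fun x _ => hin0 τ x
  have hJm : StronglyMeasurable J := by
    have h1 : StronglyMeasurable (fun q : (ℝ × ℝ) × ℝ => |u (q.1.1, q.1.2) - u (q.1.1, q.2)|) := by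
      apply Measurable.stronglyMeasurable
      exact ((hum.comp ((measurable_fst.comp measurable_fst).prodMk
        (measurable_snd.comp measurable_fst))).sub
        (hum.comp ((measurable_fst.comp measurable_fst).prodMk measurable_snd))).abs
    have h2 : StronglyMeasurable (fun p : ℝ × ℝ => ∫ y in Icc (-r) r, |u (p.1, p.2) - u (p.1, y)|) :=
      h1.integral_prod_right'
    exact h2.integral_prod_right'
  have hJb : ∀ τ ∈ Icc (-r) r, J τ ≤ 2*M*(2*r)*(2*r) := by
    intro τ hτ
    have := setIntegral_le_of_ae hvIccne
      (integrableOn_of_bdd measurableSet_Icc (hinm τ).aestronglyMeasurable.restrict hvIccne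
        (2*M*(2*r)) (fun x hx => by
          rw [abs_of_nonneg (hin0 τ x)]
          exact hinb τ hτ x hx))
      ((ae_restrict_iff' measurableSet_Icc).2 (ae_of_all _ fun x hx => hinb τ hτ x hx))
    rwa [hvIcc] at this
  have hJint : IntegrableOn J (Icc (-r) r) := by
    refine integrableOn_of_bdd measurableSet_Icc hJm.aestronglyMeasurable.restrict hvIccne
      (2*M*(2*r)*(2*r)) ?_
    intro τ hτ
    rw [abs_of_nonneg (hJ0 τ)]
    exact hJb τ hτ
  -- the core estimate: the flux average is controlled by the spatial oscillation
  have hcore : ∀ τ ∈ Icc (-r) r, |G τ| ≤ Bζ * ((2*r)⁻¹ * (M * J τ)) := by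
    intro τ hτ
    have hτ2 : τ ∈ Icc (-(2*r)) (2*r) := hIccIcc hτ
    set w : ℝ → ℝ := fun x => u (τ, x) ^ 2 / 2 with hwdef
    have hwm : Measurable w := ((huxm τ).pow_const 2).div_const 2
    have hwb : ∀ x ∈ Icc (-r) r, |w x| ≤ M ^ 2 / 2 := by
      intro x hx
      have h1 : |u (τ, x)| ≤ M := hbox τ x hτ2 (hIccIcc hx)
      rw [hwdef]
      dsimp only
      rw [abs_div, abs_pow]
      have habs2 : |(2:ℝ)| = 2 := by norm_num
      rw [habs2]
      nlinarith [abs_nonneg (u (τ, x))]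
    have hwint : IntegrableOn w (Icc (-r) r) :=
      integrableOn_of_bdd measurableSet_Icc hwm.aestronglyMeasurable.restrict hvIccne
        (M^2/2) hwb
    set cm : ℝ := (2*r)⁻¹ * ∫ y in Icc (-r) r, w y with hcmdef
    have hr0 : (2*r) ≠ 0 := by positivity
    have hosc : ∀ x ∈ Icc (-r) r,
        |w x - cm| ≤ (2*r)⁻¹ * (M * ∫ y in Icc (-r) r, |u (τ, x) - u (τ, y)|) := by
      intro x hx
      have heq1 : w x - cm = (2*r)⁻¹ * ∫ y in Icc (-r) r, (w x - w y) := by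
        rw [integral_sub (integrableOn_const (C := w x) hvIccne) hwint,
          setIntegral_const, measureReal_def, hvIcc, smul_eq_mul, hcmdef]
        field_simp
      have h3 : (∫ y in Icc (-r) r, |w x - w y|)
          ≤ ∫ y in Icc (-r) r, M * |u (τ, x) - u (τ, y)| := by
        refine setIntegral_mono_on ?_ ?_ measurableSet_Icc ?_
        · refine integrableOn_of_bdd measurableSet_Icc
            ((measurable_const.sub hwm).abs).aestronglyMeasurable.restrict hvIccne
            (M^2/2 + M^2/2) ?_
          intro y hy
          rw [abs_abs]
          exact (htri _ _).trans (add_le_add (hwb x hx) (hwb y hy))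
        · exact (hinint τ hτ x hx).const_mul M
        · intro y hy
          have huy : |u (τ, y)| ≤ M := hbox τ y hτ2 (hIccIcc hy)
          have hux : |u (τ, x)| ≤ M := hbox τ x hτ2 (hIccIcc hx)
          have heq2 : w x - w y = ((u (τ, x) + u (τ, y)) / 2) * (u (τ, x) - u (τ, y)) := by
            rw [hwdef]
            dsimp only
            ring
          rw [heq2, abs_mul]
          refine mul_le_mul ?_ le_rfl (abs_nonneg _) hM
          rw [abs_div]
          have habs2 : |(2:ℝ)| = 2 := by norm_num
          rw [habs2]
          have := abs_add_le (u (τ, x)) (u (τ, y))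
          linarith
      calc |w x - cm| = (2*r)⁻¹ * |∫ y in Icc (-r) r, (w x - w y)| := by
            rw [heq1, abs_mul, abs_of_pos (by positivity : (0:ℝ) < (2*r)⁻¹)]
        _ ≤ (2*r)⁻¹ * ∫ y in Icc (-r) r, |w x - w y| :=
            mul_le_mul_of_nonneg_left
              (abs_int_le (volume.restrict (Icc (-r) r)) (fun y => w x - w y))
              (by positivity)
        _ ≤ (2*r)⁻¹ * (M * ∫ y in Icc (-r) r, |u (τ, x) - u (τ, y)|) := by
            exact mul_le_mul_of_nonneg_left
              (h3.trans (le_of_eq (integral_const_mul M _))) (by positivity)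
    have hζ'cm_int : Integrable (fun x => cm * deriv ζ x) := hζ'int.const_mul cm
    have heqk : (fun x => (w x - cm) * deriv ζ x)
        = fun x => u (τ, x) ^ 2 / 2 * deriv ζ x - cm * deriv ζ x := by
      funext x
      rw [hwdef]
      dsimp only
      ring
    have hker2_int : Integrable (fun x => (w x - cm) * deriv ζ x) := by
      rw [heqk]
      exact (hGker_int τ hτ2).sub hζ'cm_int
    have hGτ : G τ = ∫ x, (w x - cm) * deriv ζ x := by
      rw [heqk, integral_sub (hGker_int τ hτ2) hζ'cm_int, integral_const_mul, hζ'sum, hGdef]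
      ring
    calc |G τ| = |∫ x, (w x - cm) * deriv ζ x| := by rw [hGτ]
      _ ≤ ∫ x, |(w x - cm) * deriv ζ x| := abs_int_le _ _
      _ = ∫ x in Icc (-r) r, |(w x - cm) * deriv ζ x| := by
          symm
          apply setIntegral_eq_integral_of_forall_compl_eq_zero
          intro x hx
          have hx' : x ∉ Ioo (-r) r := fun h => hx (Ioo_subset_Icc_self h)
          rw [hζ'0 x hx', mul_zero, abs_zero]
      _ ≤ ∫ x in Icc (-r) r,
            Bζ * ((2*r)⁻¹ * (M * ∫ y in Icc (-r) r, |u (τ, x) - u (τ, y)|)) := by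
          refine setIntegral_mono_on hker2_int.abs.integrableOn ?_ measurableSet_Icc ?_
          · refine integrableOn_of_bdd measurableSet_Icc ?_ hvIccne
              (Bζ * ((2*r)⁻¹ * (M * (2*M*(2*r))))) ?_
            · exact ((((hinm τ).measurable.const_mul M).const_mul
                (2*r)⁻¹).const_mul Bζ).aestronglyMeasurable.restrict
            · intro x hx
              have h1 := hinb τ hτ x hx
              have h2 := hin0 τ x
              rw [abs_of_nonneg (by positivity)]
              gcongr
          · intro x hx
            rw [abs_mul]
            calc |w x - cm| * |deriv ζ x|
                ≤ ((2*r)⁻¹ * (M * ∫ y in Icc (-r) r, |u (τ, x) - u (τ, y)|)) * Bζ :=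
                  mul_le_mul (hosc x hx) (hζ'b x) (abs_nonneg _)
                    (mul_nonneg (by positivity) (mul_nonneg hM (hin0 τ x)))
              _ = Bζ * ((2*r)⁻¹ * (M * ∫ y in Icc (-r) r, |u (τ, x) - u (τ, y)|)) := by ring
      _ = Bζ * ((2*r)⁻¹ * (M * J τ)) := by
          rw [integral_const_mul, integral_const_mul, integral_const_mul, hJdef]
  -- assembling: K0 is controlled by the triple integral
  have hK0b : K0 ≤ Bζ * ((2*r)⁻¹ * (M * ∫ τ in Icc (-r) r, J τ)) := by
    have h1 : K0 ≤ ∫ τ in Icc (-r) r, Bζ * ((2*r)⁻¹ * (M * J τ)) := by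
      rw [hK0def]
      refine setIntegral_mono_on hG₀int.abs.integrableOn
        (((hJint.const_mul M).const_mul (2*r)⁻¹).const_mul Bζ) measurableSet_Icc ?_
      intro τ hτ
      rw [hG₀def, indicator_of_mem (hIccIoo2 hτ)]
      exact hcore τ hτ
    calc K0 ≤ ∫ τ in Icc (-r) r, Bζ * ((2*r)⁻¹ * (M * J τ)) := h1
      _ = Bζ * ((2*r)⁻¹ * (M * ∫ τ in Icc (-r) r, J τ)) := by
          rw [integral_const_mul, integral_const_mul, integral_const_mul]
  have hJS0 : 0 ≤ ∫ τ in Icc (-r) r, J τ :=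
    setIntegral_nonneg measurableSet_Icc fun τ _ => hJ0 τ
  -- the right-hand side as an integral
  have hD : (⨍ t in Icc (-r) r, ⨍ x in Icc (-r) r, ⨍ y in Icc (-r) r, |u (t, x) - u (t, y)|)
      = (2*r)⁻¹ * ((2*r)⁻¹ * ((2*r)⁻¹ * ∫ τ in Icc (-r) r, J τ)) := by
    calc (⨍ t in Icc (-r) r, ⨍ x in Icc (-r) r, ⨍ y in Icc (-r) r, |u (t, x) - u (t, y)|)
        = (2*r)⁻¹ * ∫ t in Icc (-r) r,
            ⨍ x in Icc (-r) r, ⨍ y in Icc (-r) r, |u (t, x) - u (t, y)| := by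
          rw [setAverage_eq (μ := volume), measureReal_def, hvIcc, smul_eq_mul]
      _ = (2*r)⁻¹ * ∫ t in Icc (-r) r, ((2*r)⁻¹ * ((2*r)⁻¹ * J t)) := by
          congr 1
          refine integral_congr_ae (ae_of_all _ fun t => ?_)
          dsimp only
          rw [setAverage_eq (μ := volume), measureReal_def, hvIcc, smul_eq_mul]
          congr 1
          calc (∫ x in Icc (-r) r, ⨍ y in Icc (-r) r, |u (t, x) - u (t, y)|)
              = ∫ x in Icc (-r) r, ((2*r)⁻¹ * ∫ y in Icc (-r) r, |u (t, x) - u (t, y)|) := by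
                refine integral_congr_ae (ae_of_all _ fun x => ?_)
                dsimp only
                rw [setAverage_eq (μ := volume), measureReal_def, hvIcc, smul_eq_mul]
            _ = (2*r)⁻¹ * J t := by rw [integral_const_mul, hJdef]
      _ = (2*r)⁻¹ * ((2*r)⁻¹ * ((2*r)⁻¹ * ∫ τ in Icc (-r) r, J τ)) := by
          rw [integral_const_mul, integral_const_mul]
  -- final algebra
  have hT0 : (0:ℝ) ≤ (2*r)⁻¹ := by positivity
  have hr0' : r ≠ 0 := ne_of_gt hr
  have hrr : r⁻¹ = 2 * (2*r)⁻¹ := by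
    field_simp
  calc (⨍ s in Icc (-r) r, ⨍ t in Icc (-r) r,
          |∫ x, (u (s, x) - u (t, x)) * (r⁻¹ * η (x / r))|)
      ≤ K0 := hLHS
    _ ≤ Bζ * ((2*r)⁻¹ * (M * ∫ τ in Icc (-r) r, J τ)) := hK0b
    _ ≤ (4 * M * B + 1) *
        ((2*r)⁻¹ * ((2*r)⁻¹ * ((2*r)⁻¹ * ∫ τ in Icc (-r) r, J τ))) := by
        rw [hBζdef, hrr]
        nlinarith [mul_nonneg (mul_nonneg (mul_nonneg hT0 hT0) hT0) hJS0,
          mul_nonneg hM hB0]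
    _ = (4 * M * B + 1) * ⨍ t in Icc (-r) r, ⨍ x in Icc (-r) r, ⨍ y in Icc (-r) r,
          |u (t, x) - u (t, y)| := by rw [hD]
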